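/- (Deterministic LASSO oracle inequality.) Let y = Xβ₀ + ε with X ∈ ℝ^{n×p}, let X̃ ∈ ℝ^{n×p} be any surrogate design matrix, and let λ > 0. Let β̃ ∈ argmin_{β∈ℝ^p} { (1/(2n))‖y − X̃β‖₂² + λ‖β‖₁ }. Suppose that (a) ‖(1/n)X̃ᵀ(X̃ − X)β₀‖_∞ ≤ λ/4, (b) ‖(1/n)X̃ᵀε‖_∞ ≤ λ/4, and (c) inf over w in 𝒞 ∩ S^{p−1} of (1/n)‖X̃w‖₂² ≥ κ, where T is the support of β₀, |T| = s, and 𝒞 = {w ∈ ℝ^p : ‖w_{T^c}‖₁ ≤ 3‖w_T‖₁}. Then ‖β̃ − β₀‖₂ ≤ 12λ√s / κ. -/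

import Mathlib

open MeasureTheory Real

/-- **Deterministic LASSO oracle inequality.**
Given `y = Xβ₀ + ε`, a surrogate design matrix `X̃`, and a LASSO minimizer `β̃` with
regularization parameter `λ > 0`, if the two `ℓ∞` conditions and the restricted
eigenvalue condition on the cone `𝒞 = {w : ‖w_{Tᶜ}‖₁ ≤ 3‖w_T‖₁}` hold, then
`‖β̃ − β₀‖₂ ≤ 12 λ √s / κ`. -/
theorem lasso_oracle_inequality
    {n p : ℕ} (hn : 0 < n)
    (X Xt : Fin n → Fin p → ℝ) (β₀ : Fin p → ℝ) (ε : Fin n → ℝ) (y : Fin n → ℝ)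
    (hy : ∀ i, y i = (∑ a, X i a * β₀ a) + ε i)
    (T : Finset (Fin p)) (hT : ∀ a, a ∈ T ↔ β₀ a ≠ 0)
    (s : ℕ) (hs : T.card = s)
    (lam κ : ℝ) (hlam : 0 < lam) (hκ : 0 < κ)
    (βt : Fin p → ℝ)
    (hmin : ∀ β : Fin p → ℝ,
      (1 / (2 * (n : ℝ))) * (∑ i, (y i - ∑ a, Xt i a * βt a) ^ 2) + lam * ∑ a, |βt a| ≤
        (1 / (2 * (n : ℝ))) * (∑ i, (y i - ∑ a, Xt i a * β a) ^ 2) + lam * ∑ a, |β a|)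
    (ha : ∀ a, |(1 / (n : ℝ)) * ∑ i, Xt i a * (∑ b, (Xt i b - X i b) * β₀ b)| ≤ lam / 4)
    (hb : ∀ a, |(1 / (n : ℝ)) * ∑ i, Xt i a * ε i| ≤ lam / 4)
    (hc : ∀ w : Fin p → ℝ, (∑ a ∈ Tᶜ, |w a|) ≤ 3 * ∑ a ∈ T, |w a| →
      (∑ a, w a ^ 2) = 1 → κ ≤ (1 / (n : ℝ)) * ∑ i, (∑ a, Xt i a * w a) ^ 2) :
    Real.sqrt (∑ a, (βt a - β₀ a) ^ 2) ≤ 12 * lam * Real.sqrt s / κ := by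
  have hn' : (0:ℝ) < n := by exact_mod_cast hn
  set w : Fin p → ℝ := fun a => βt a - β₀ a with hw
  set e : Fin n → ℝ := fun i => y i - ∑ a, Xt i a * β₀ a with he
  set v : Fin n → ℝ := fun i => ∑ a, Xt i a * w a with hv
  set A : ℝ := ∑ a ∈ T, |w a| with hA
  set B : ℝ := ∑ a ∈ Tᶜ, |w a| with hB
  set Q : ℝ := (1 / (n:ℝ)) * ∑ i, v i ^ 2 with hQ
  have hA0 : 0 ≤ A := Finset.sum_nonneg fun a _ => abs_nonneg _
  have hB0 : 0 ≤ B := Finset.sum_nonneg fun a _ => abs_nonneg _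
  have hQ0 : 0 ≤ Q := by
    apply mul_nonneg (by positivity)
    exact Finset.sum_nonneg fun i _ => sq_nonneg _
  -- residual identity
  have hid : ∀ i, y i - ∑ a, Xt i a * βt a = e i - v i := by
    intro i
    simp only [he, hv, hw, mul_sub, Finset.sum_sub_distrib]
    ring
  -- e expressed via ε and design mismatch
  have he2 : ∀ i, e i = ε i - ∑ b, (Xt i b - X i b) * β₀ b := by
    intro i
    simp only [he, hy i, sub_mul, Finset.sum_sub_distrib]
    ring
  -- correlation bound
  have hcorr : ∀ a, |(1 / (n:ℝ)) * ∑ i, Xt i a * e i| ≤ lam / 2 := by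
    intro a
    have hsplit : (1 / (n:ℝ)) * ∑ i, Xt i a * e i
        = (1 / (n:ℝ)) * ∑ i, Xt i a * ε i
          - (1 / (n:ℝ)) * ∑ i, Xt i a * (∑ b, (Xt i b - X i b) * β₀ b) := by
      rw [← mul_sub, ← Finset.sum_sub_distrib]
      congr 1; apply Finset.sum_congr rfl; intro i _
      rw [he2 i]; ring
    rw [hsplit]
    calc |(1 / (n:ℝ)) * ∑ i, Xt i a * ε i
          - (1 / (n:ℝ)) * ∑ i, Xt i a * (∑ b, (Xt i b - X i b) * β₀ b)|
        ≤ |(1 / (n:ℝ)) * ∑ i, Xt i a * ε i|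
          + |(1 / (n:ℝ)) * ∑ i, Xt i a * (∑ b, (Xt i b - X i b) * β₀ b)| := abs_sub _ _
      _ ≤ lam / 4 + lam / 4 := add_le_add (hb a) (ha a)
      _ = lam / 2 := by ring
  -- cross term
  have hcross : (1 / (n:ℝ)) * ∑ i, e i * v i ≤ (lam / 2) * (A + B) := by
    have hswap : ∑ i, e i * v i = ∑ a, (∑ i, Xt i a * e i) * w a := by
      simp only [hv, Finset.mul_sum, Finset.sum_mul]
      rw [Finset.sum_comm]
      apply Finset.sum_congr rfl; intro a _
      apply Finset.sum_congr rfl; intro i _; ring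
    have hAB : A + B = ∑ a, |w a| := by
      rw [hA, hB, Finset.sum_add_sum_compl]
    rw [hswap, hAB, Finset.mul_sum, Finset.mul_sum]
    apply Finset.sum_le_sum
    intro a _
    have h1 : (1 / (n:ℝ)) * ((∑ i, Xt i a * e i) * w a)
        = ((1 / (n:ℝ)) * ∑ i, Xt i a * e i) * w a := by ring
    rw [h1]
    calc ((1 / (n:ℝ)) * ∑ i, Xt i a * e i) * w a
        ≤ |((1 / (n:ℝ)) * ∑ i, Xt i a * e i) * w a| := le_abs_self _
      _ = |(1 / (n:ℝ)) * ∑ i, Xt i a * e i| * |w a| := abs_mul _ _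
      _ ≤ (lam / 2) * |w a| := mul_le_mul_of_nonneg_right (hcorr a) (abs_nonneg _)
  -- ℓ1 gap bound
  have hgap : (∑ a, |β₀ a|) - (∑ a, |βt a|) ≤ A - B := by
    have h0 : ∀ a, (|β₀ a| - |βt a|) ≤ (if a ∈ T then |w a| else -|w a|) := by
      intro a
      by_cases haT : a ∈ T
      · simp only [haT, if_true]
        have := abs_sub_abs_le_abs_sub (β₀ a) (βt a)
        have h2 : |β₀ a - βt a| = |w a| := by rw [hw]; exact (abs_sub_comm _ _)
        linarith
      · simp only [haT, if_false]
        have hz : β₀ a = 0 := by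
          by_contra hz; exact haT ((hT a).2 hz)
        have hwa : |w a| = |βt a| := by simp [hw, hz]
        rw [hwa, hz]; simp
    calc (∑ a, |β₀ a|) - (∑ a, |βt a|) = ∑ a, (|β₀ a| - |βt a|) := by
          rw [Finset.sum_sub_distrib]
      _ ≤ ∑ a, (if a ∈ T then |w a| else -|w a|) := Finset.sum_le_sum fun a _ => h0 a
      _ = A - B := by
          rw [← Finset.sum_add_sum_compl T]
          have h1 : ∑ a ∈ T, (if a ∈ T then |w a| else -|w a|) = A :=
            Finset.sum_congr rfl fun a h => if_pos h
          have h2 : ∑ a ∈ Tᶜ, (if a ∈ T then |w a| else -|w a|) = ∑ a ∈ Tᶜ, -|w a| :=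
            Finset.sum_congr rfl fun a h => if_neg (Finset.mem_compl.mp h)
          rw [h1, h2, Finset.sum_neg_distrib]
          ring
  -- basic inequality
  have hbasic : Q / 2 ≤ (3 * lam / 2) * A - (lam / 2) * B := by
    have hm := hmin β₀
    have hexp : ∑ i, (y i - ∑ a, Xt i a * βt a) ^ 2
        = (∑ i, (e i)^2) - 2 * ∑ i, e i * v i + ∑ i, v i ^ 2 := by
      have h3 : ∀ i, (y i - ∑ a, Xt i a * βt a) ^ 2
          = (e i)^2 - 2 * (e i * v i) + v i ^ 2 := by
        intro i; rw [hid i]; ring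
      rw [Finset.sum_congr rfl fun i _ => h3 i]
      rw [Finset.sum_add_distrib, Finset.sum_sub_distrib, ← Finset.mul_sum]
    have he0 : ∀ i, y i - ∑ a, Xt i a * β₀ a = e i := fun i => rfl
    simp only [he0] at hm
    rw [hexp] at hm
    have hdist : (1 / (2 * (n:ℝ))) * ((∑ i, (e i)^2) - 2 * (∑ i, e i * v i) + ∑ i, v i ^ 2)
        = (1 / (2 * (n:ℝ))) * (∑ i, (e i)^2) - (1/(n:ℝ)) * (∑ i, e i * v i)
          + (1 / (2 * (n:ℝ))) * (∑ i, v i ^ 2) := by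
      field_simp
    rw [hdist] at hm
    have hhalf : (1:ℝ) / (2 * (n:ℝ)) = (1 / (n:ℝ)) / 2 := by
      field_simp
    have hQhalf : Q / 2 = (1 / (2 * (n:ℝ))) * (∑ i, v i ^ 2) := by
      rw [hQ, hhalf]; ring
    rw [hQhalf]
    nlinarith [hm, hcross, mul_le_mul_of_nonneg_left hgap hlam.le]
  -- cone condition
  have hcone : B ≤ 3 * A := by nlinarith [hbasic, hQ0]
  have hQ3A : Q ≤ 3 * lam * A := by nlinarith [hbasic, hB0]
  -- Cauchy–Schwarz on T
  set N2 : ℝ := ∑ a, w a ^ 2 with hN2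
  have hN20 : 0 ≤ N2 := Finset.sum_nonneg fun a _ => sq_nonneg _
  set N : ℝ := Real.sqrt N2 with hN
  have hCS : A ≤ Real.sqrt s * N := by
    have h1 : A ^ 2 ≤ (T.card : ℝ) * ∑ a ∈ T, |w a| ^ 2 :=
      sq_sum_le_card_mul_sum_sq
    have h2 : (∑ a ∈ T, |w a| ^ 2) ≤ N2 := by
      rw [hN2, Finset.sum_congr rfl fun a _ => sq_abs (w a)]
      exact Finset.sum_le_sum_of_subset_of_nonneg (Finset.subset_univ T)
        (fun a _ _ => sq_nonneg _)
    have h3 : A ^ 2 ≤ (s:ℝ) * N2 := by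
      rw [← hs]; push_cast
      nlinarith [h1, h2, Nat.cast_nonneg (α := ℝ) T.card]
    calc A = Real.sqrt (A ^ 2) := by rw [Real.sqrt_sq hA0]
      _ ≤ Real.sqrt ((s:ℝ) * N2) := Real.sqrt_le_sqrt h3
      _ = Real.sqrt s * N := by rw [Real.sqrt_mul (by positivity)]
  show N ≤ 12 * lam * Real.sqrt s / κ
  by_cases hw0 : N2 = 0
  · rw [hN, hw0, Real.sqrt_zero]
    positivity
  · have hN2pos : 0 < N2 := lt_of_le_of_ne hN20 (Ne.symm hw0)
    have hNpos : 0 < N := Real.sqrt_pos.mpr hN2pos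
    have hNsq : N ^ 2 = N2 := Real.sq_sqrt hN20
    -- apply RE condition to w / N
    have hc1 : (∑ a ∈ Tᶜ, |w a / N|) ≤ 3 * ∑ a ∈ T, |w a / N| := by
      have habs : ∀ a, |w a / N| = |w a| / N := fun a => by
        rw [abs_div, abs_of_pos hNpos]
      simp only [habs, ← Finset.sum_div]
      rw [div_le_iff₀ hNpos]
      have h14 : 3 * ((∑ i ∈ T, |w i|) / N) * N = 3 * ∑ i ∈ T, |w i| := by
        field_simp
      rw [h14]
      exact hcone
    have hc2 : (∑ a, (w a / N) ^ 2) = 1 := by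
      simp only [div_pow, ← Finset.sum_div, hNsq]
      exact div_self hw0
    have hre := hc (fun a => w a / N) hc1 hc2
    have hvdiv : ∀ i, (∑ a, Xt i a * (w a / N)) = v i / N := by
      intro i; rw [hv, Finset.sum_div]
      exact Finset.sum_congr rfl fun a _ => by ring
    simp only [hvdiv] at hre
    have h13 : ∑ i, (v i / N) ^ 2 = (∑ i, v i ^ 2) / N2 := by
      rw [Finset.sum_div]
      exact Finset.sum_congr rfl fun i _ => by rw [div_pow, hNsq]
    rw [h13] at hre
    have hre2 : κ ≤ Q / N2 := by
      calc κ ≤ (1 / (n:ℝ)) * ((∑ i, v i ^ 2) / N2) := hre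
        _ = Q / N2 := by rw [hQ]; ring
    have hκN2 : κ * N2 ≤ Q := (le_div_iff₀ hN2pos).mp hre2
    have hNN : N * N = N2 := Real.mul_self_sqrt hN20
    have h9 : κ * N ≤ 3 * lam * Real.sqrt s := by
      have h10 : 3 * lam * A ≤ 3 * lam * (Real.sqrt s * N) :=
        mul_le_mul_of_nonneg_left hCS (by positivity)
      have h11 : κ * N * N ≤ (3 * lam * Real.sqrt s) * N := by
        calc κ * N * N = κ * N2 := by rw [mul_assoc, hNN]
          _ ≤ Q := hκN2
          _ ≤ 3 * lam * A := hQ3A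
          _ ≤ 3 * lam * (Real.sqrt s * N) := h10
          _ = (3 * lam * Real.sqrt s) * N := by ring
      exact le_of_mul_le_mul_right h11 hNpos
    calc N ≤ 3 * lam * Real.sqrt s / κ := by
          rw [le_div_iff₀ hκ]; linarith [h9]
      _ ≤ 12 * lam * Real.sqrt s / κ := by
          have hls : 0 ≤ lam * Real.sqrt s := by positivity
          exact div_le_div_of_nonneg_right (by linarith) hκ.le
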